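/- arXiv:1410.0661 — 5 statements merged into one kernel-verified Lean document; each statement's English description precedes it below -/
import Mathlib

section
/- For any bounded measurable function h : T → ℝ, any prior probability measure π on T, and any probability measure ρ on T with KL(ρ,π) < ∞, one has log(∫ exp(h) dπ) = ∫ h dρ − KL(ρ,π) + KL(ρ, π_{exp(h)}), where π_{exp(h)} is the probability measure with density dπ_{exp(h)}/dπ = exp(h(t)) / ∫ exp(h) dπ. -/
open MeasureTheory Real

noncomputable section
open Classical in

/-- Kullback–Leibler divergence: `∫ log(dρ/dpr) dρ` when `ρ ≪ pr` and the
integrand is integrable, `∞` otherwise. -/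
def KL {T : Type*} [MeasurableSpace T] (ρ pr : Measure T) : ENNReal :=
  if ρ ≪ pr ∧ Integrable (fun t => Real.log (ρ.rnDeriv pr t).toReal) ρ then
    ENNReal.ofReal (∫ t, Real.log (ρ.rnDeriv pr t).toReal ∂ρ)
  else ⊤

lemma integral_llr_nonneg' {T : Type*} [MeasurableSpace T]
    (ρ ν : Measure T) [IsProbabilityMeasure ρ] [IsProbabilityMeasure ν]
    (hac : ρ ≪ ν) (hint : Integrable (llr ρ ν) ρ) :
    0 ≤ ∫ t, llr ρ ν t ∂ρ := by
  have hint2 : Integrable (fun t => (ν.rnDeriv ρ t).toReal) ρ :=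
    Measure.integrable_toReal_rnDeriv
  have hle : ∫ t, llr ν ρ t ∂ρ ≤ ∫ t, ((ν.rnDeriv ρ t).toReal - 1) ∂ρ := by
    refine integral_mono_ae (hint.neg.congr (neg_llr hac)) (hint2.sub (integrable_const 1)) ?_
    filter_upwards [Measure.rnDeriv_pos' hac, Measure.rnDeriv_lt_top ν ρ]
      with t hpos hlt
    exact Real.log_le_sub_one_of_pos (ENNReal.toReal_pos hpos.ne' hlt.ne)
  have heq : ∫ t, llr ν ρ t ∂ρ = - ∫ t, llr ρ ν t ∂ρ := by
    rw [← integral_neg]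
    exact (integral_congr_ae (neg_llr hac)).symm
  have hub : ∫ t, ((ν.rnDeriv ρ t).toReal - 1) ∂ρ ≤ 0 := by
    rw [integral_sub hint2 (integrable_const 1)]
    simp only [integral_const, measure_univ, probReal_univ, ENNReal.toReal_one, smul_eq_mul, one_mul]
    have := Measure.setIntegral_toReal_rnDeriv_le (ν := ρ) (μ := ν)
      (s := Set.univ) (measure_ne_top ν _)
    rw [setIntegral_univ] at this
    simp only [measure_univ, probReal_univ, ENNReal.toReal_one] at this
    linarith
  rw [heq] at hle
  linarith

theorem gibbs_variational_identity {T : Type*} [MeasurableSpace T]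
    (pr : Measure T) [IsProbabilityMeasure pr]
    (h : T → ℝ) (hmeas : Measurable h) (hbdd : ∃ C, ∀ t, |h t| ≤ C)
    (ρ : Measure T) [IsProbabilityMeasure ρ] (hKL : KL ρ pr < ⊤) :
    Real.log (∫ t, Real.exp (h t) ∂pr)
      = ∫ t, h t ∂ρ - (KL ρ pr).toReal
        + (KL ρ (pr.withDensity fun t =>
            ENNReal.ofReal (Real.exp (h t) / ∫ u, Real.exp (h u) ∂pr))).toReal := by
  obtain ⟨C, hC⟩ := hbdd
  -- basic integrabilities
  have hexp : Integrable (fun t => Real.exp (h t)) pr := by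
    refine (integrable_const (Real.exp C)).mono' (hmeas.exp.aestronglyMeasurable) ?_
    exact ae_of_all _ fun t => by
      rw [Real.norm_eq_abs, abs_of_pos (Real.exp_pos _)]
      exact Real.exp_le_exp.2 ((abs_le.1 (hC t)).2)
  have hhρ : Integrable h ρ := by
    refine (integrable_const C).mono' hmeas.aestronglyMeasurable ?_
    exact ae_of_all _ fun t => (hC t)
  -- unpack KL ρ pr < ⊤
  have hcond : ρ ≪ pr ∧ Integrable (fun t => Real.log (ρ.rnDeriv pr t).toReal) ρ := by
    by_contra hcon
    rw [KL, if_neg hcon] at hKL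
    exact absurd hKL (lt_irrefl _)
  obtain ⟨hac, hint⟩ := hcond
  have hint' : Integrable (llr ρ pr) ρ := hint
  have hKLval : KL ρ pr = ENNReal.ofReal (∫ t, llr ρ pr t ∂ρ) := by
    rw [KL, if_pos ⟨hac, hint⟩]; rfl
  -- the tilted measure
  have htilt : (pr.withDensity fun t =>
      ENNReal.ofReal (Real.exp (h t) / ∫ u, Real.exp (h u) ∂pr)) = pr.tilted h := rfl
  haveI : IsProbabilityMeasure (pr.tilted h) := isProbabilityMeasure_tilted hexp
  have hac2 : ρ ≪ pr.tilted h := hac.trans (absolutelyContinuous_tilted hexp)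
  have hint2 : Integrable (llr ρ (pr.tilted h)) ρ :=
    integrable_llr_tilted_right hac hhρ hint' hexp
  have hKLval2 : KL ρ (pr.tilted h) = ENNReal.ofReal (∫ t, llr ρ (pr.tilted h) t ∂ρ) := by
    rw [KL, if_pos ⟨hac2, hint2⟩]; rfl
  have hval : ∫ t, llr ρ (pr.tilted h) t ∂ρ
      = ∫ t, llr ρ pr t ∂ρ - ∫ t, h t ∂ρ + Real.log (∫ t, Real.exp (h t) ∂pr) :=
    integral_llr_tilted_right hac hhρ hexp hint'
  have h1 : 0 ≤ ∫ t, llr ρ pr t ∂ρ := integral_llr_nonneg' ρ pr hac hint'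
  have h2 : 0 ≤ ∫ t, llr ρ (pr.tilted h) t ∂ρ := integral_llr_nonneg' ρ _ hac2 hint2
  rw [htilt, hKLval, hKLval2, ENNReal.toReal_ofReal h1, ENNReal.toReal_ofReal h2, hval]
  ring
end
end

section
/- For any bounded measurable function h : T → ℝ and any probability measure π on T, log(∫ exp(h) dπ) = sup over probability measures ρ on T of (∫ h dρ − KL(ρ,π)). In particular, the supremum is attained by the Gibbs measure with density proportional to exp(h). -/
open MeasureTheory Real

noncomputable section
/-- Key inequality (Donsker–Varadhan upper bound). -/
lemma gibbs_key {T : Type*} [MeasurableSpace T]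
    (pr : Measure T) [IsProbabilityMeasure pr]
    (g : T → ℝ) (hg : Measurable g) (C : ℝ) (hC : ∀ t, |g t| ≤ C)
    (ρ : Measure T) [IsProbabilityMeasure ρ] (hac : ρ ≪ pr)
    (hint : Integrable (fun t => Real.log (ρ.rnDeriv pr t).toReal) ρ) :
    ∫ t, g t ∂ρ - ∫ t, Real.log (ρ.rnDeriv pr t).toReal ∂ρ
      ≤ Real.log (∫ t, Real.exp (g t) ∂pr) := by
  set r : T → ℝ := fun t => (ρ.rnDeriv pr t).toReal with hr_def
  set Z : ℝ := ∫ t, Real.exp (g t) ∂pr with hZ_def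
  have hgexp_pr : Integrable (fun t => Real.exp (g t)) pr := by
    refine Integrable.mono' (integrable_const (Real.exp C)) hg.exp.aestronglyMeasurable ?_
    filter_upwards with t
    rw [Real.norm_eq_abs, abs_of_pos (Real.exp_pos _)]
    exact Real.exp_le_exp.mpr ((abs_le.mp (hC t)).2)
  have hZpos : (0:ℝ) < Z := integral_exp_pos hgexp_pr
  have hgρ : Integrable g ρ := by
    refine Integrable.mono' (integrable_const C) hg.aestronglyMeasurable ?_
    filter_upwards with t using (Real.norm_eq_abs _) ▸ hC t
  set f : T → ℝ := fun t => g t - Real.log (r t) with hf_def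
  have hfint : Integrable f ρ := hgρ.sub hint
  have hr_meas : Measurable r := (Measure.measurable_rnDeriv ρ pr).ennreal_toReal
  have hr_pos : ∀ᵐ t ∂ρ, 0 < r t := by
    filter_upwards [Measure.rnDeriv_pos hac,
      (Measure.rnDeriv_lt_top ρ pr).filter_mono hac.ae_le] with t h1 h2
    exact ENNReal.toReal_pos h1.ne' h2.ne
  have hexp_f : (fun t => Real.exp (f t)) =ᵐ[ρ] fun t => Real.exp (g t) / r t := by
    filter_upwards [hr_pos] with t ht
    rw [hf_def]
    simp only
    rw [Real.exp_sub, Real.exp_log ht]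
  -- lintegral bound
  have hρ_eq : pr.withDensity (ρ.rnDeriv pr) = ρ := Measure.withDensity_rnDeriv_eq ρ pr hac
  have hlin : ∫⁻ t, ENNReal.ofReal (Real.exp (g t) / r t) ∂ρ ≤ ENNReal.ofReal Z := by
    conv_lhs => rw [← hρ_eq]
    rw [lintegral_withDensity_eq_lintegral_mul _ (Measure.measurable_rnDeriv ρ pr)
      (by exact (hg.exp.div hr_meas).ennreal_ofReal)]
    calc ∫⁻ t, ρ.rnDeriv pr t * ENNReal.ofReal (Real.exp (g t) / r t) ∂pr
        ≤ ∫⁻ t, ENNReal.ofReal (Real.exp (g t)) ∂pr := by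
          refine lintegral_mono fun t => ?_
          rcases eq_or_ne (ρ.rnDeriv pr t) ⊤ with htop | htop
          · simp [hr_def, htop]
          rcases eq_or_ne (ρ.rnDeriv pr t) 0 with h0 | h0
          · simp [h0]
          · have hrt : 0 < r t := ENNReal.toReal_pos h0 htop
            rw [show ρ.rnDeriv pr t = ENNReal.ofReal (r t) by
              rw [ENNReal.ofReal_toReal htop],
              ← ENNReal.ofReal_mul hrt.le, mul_div_cancel₀ _ hrt.ne']
      _ = ENNReal.ofReal Z := by
          rw [hZ_def, ← ofReal_integral_eq_lintegral_ofReal hgexp_pr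
            (ae_of_all _ fun t => (Real.exp_pos _).le)]
  have hexp_int : Integrable (fun t => Real.exp (f t)) ρ := by
    refine Integrable.congr ?_ hexp_f.symm
    refine ⟨(hg.exp.div hr_meas).aestronglyMeasurable, ?_⟩
    rw [hasFiniteIntegral_iff_ofReal ?_]
    · exact lt_of_le_of_lt hlin ENNReal.ofReal_lt_top
    · filter_upwards [hr_pos] with t ht
      positivity
  -- Jensen
  have hjensen : Real.exp (∫ t, f t ∂ρ) ≤ ∫ t, Real.exp (f t) ∂ρ := by
    have := convexOn_exp.map_integral_le (μ := ρ) (f := f)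
      Real.continuous_exp.continuousOn isClosed_univ
      (Filter.Eventually.of_forall fun _ => Set.mem_univ _) hfint ?_
    · exact this
    · exact hexp_int
  have hle : ∫ t, Real.exp (f t) ∂ρ ≤ Z := by
    rw [integral_congr_ae hexp_f]
    rw [integral_eq_lintegral_of_nonneg_ae (f := fun t => Real.exp (g t) / r t) ?_ (hg.exp.div hr_meas).aestronglyMeasurable]
    · calc (∫⁻ t, ENNReal.ofReal (Real.exp (g t) / r t) ∂ρ).toReal
          ≤ (ENNReal.ofReal Z).toReal :=
            ENNReal.toReal_mono ENNReal.ofReal_ne_top hlin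
        _ = Z := ENNReal.toReal_ofReal hZpos.le
    · filter_upwards [hr_pos] with t ht; positivity
  have : ∫ t, f t ∂ρ ≤ Real.log Z :=
    (Real.le_log_iff_exp_le hZpos).mpr (hjensen.trans hle)
  rwa [hf_def, integral_sub hgρ hint] at this

lemma log_rnDeriv_integral_nonneg {T : Type*} [MeasurableSpace T]
    (pr : Measure T) [IsProbabilityMeasure pr]
    (ρ : Measure T) [IsProbabilityMeasure ρ] (hac : ρ ≪ pr)
    (hint : Integrable (fun t => Real.log (ρ.rnDeriv pr t).toReal) ρ) :
    0 ≤ ∫ t, Real.log (ρ.rnDeriv pr t).toReal ∂ρ := by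
  have := gibbs_key pr (fun _ => 0) measurable_const 0 (fun t => by simp) ρ hac hint
  simpa using this


theorem gibbs_variational_sup {T : Type*} [MeasurableSpace T]
    (pr : Measure T) [IsProbabilityMeasure pr]
    (h : T → ℝ) (hmeas : Measurable h) (hbdd : ∃ C, ∀ t, |h t| ≤ C) :
    Real.log (∫ t, Real.exp (h t) ∂pr)
      = sSup {x : ℝ | ∃ ρ : Measure T, IsProbabilityMeasure ρ ∧ KL ρ pr < ⊤ ∧
          x = ∫ t, h t ∂ρ - (KL ρ pr).toReal}
    ∧ (∫ t, h t ∂(pr.withDensity fun t =>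
          ENNReal.ofReal (Real.exp (h t) / ∫ u, Real.exp (h u) ∂pr))
        - (KL (pr.withDensity fun t =>
            ENNReal.ofReal (Real.exp (h t) / ∫ u, Real.exp (h u) ∂pr)) pr).toReal
        = Real.log (∫ t, Real.exp (h t) ∂pr)) := by
  obtain ⟨C, hC⟩ := hbdd
  set Z : ℝ := ∫ t, Real.exp (h t) ∂pr with hZ_def
  have hexp_int : Integrable (fun t => Real.exp (h t)) pr := by
    refine Integrable.mono' (integrable_const (Real.exp C)) hmeas.exp.aestronglyMeasurable ?_
    filter_upwards with t
    rw [Real.norm_eq_abs, abs_of_pos (Real.exp_pos _)]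
    exact Real.exp_le_exp.mpr ((abs_le.mp (hC t)).2)
  have hZpos : (0:ℝ) < Z := integral_exp_pos hexp_int
  have hts : (pr.withDensity fun t =>
      ENNReal.ofReal (Real.exp (h t) / ∫ u, Real.exp (h u) ∂pr)) = pr.tilted h := rfl
  haveI hprob : IsProbabilityMeasure (pr.tilted h) := isProbabilityMeasure_tilted hexp_int
  have hacs : pr.tilted h ≪ pr := tilted_absolutelyContinuous pr h
  have hlog : (fun x => Real.log ((pr.tilted h).rnDeriv pr x).toReal)
      =ᵐ[pr.tilted h] fun x => h x - Real.log Z :=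
    (log_rnDeriv_tilted_left_self hexp_int).filter_mono hacs.ae_le
  have hhρ : ∀ (ρ : Measure T), IsProbabilityMeasure ρ → Integrable h ρ := by
    intro ρ hρ
    refine Integrable.mono' (integrable_const C) hmeas.aestronglyMeasurable ?_
    filter_upwards with t using (Real.norm_eq_abs _) ▸ hC t
  have hints : Integrable (fun t => Real.log ((pr.tilted h).rnDeriv pr t).toReal)
      (pr.tilted h) :=
    ((hhρ _ hprob).sub (integrable_const (Real.log Z))).congr hlog.symm
  have hI : ∫ t, Real.log ((pr.tilted h).rnDeriv pr t).toReal ∂(pr.tilted h)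
      = ∫ t, h t ∂(pr.tilted h) - Real.log Z := by
    rw [integral_congr_ae hlog, integral_sub (hhρ _ hprob) (integrable_const _),
      integral_const, probReal_univ, one_smul]
  have hInn : 0 ≤ ∫ t, Real.log ((pr.tilted h).rnDeriv pr t).toReal ∂(pr.tilted h) :=
    log_rnDeriv_integral_nonneg pr _ hacs hints
  have hKLs : KL (pr.tilted h) pr
      = ENNReal.ofReal (∫ t, Real.log ((pr.tilted h).rnDeriv pr t).toReal ∂(pr.tilted h)) := by
    unfold KL
    rw [if_pos ⟨hacs, hints⟩]
  have hKLlt : KL (pr.tilted h) pr < ⊤ := by rw [hKLs]; exact ENNReal.ofReal_lt_top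
  have hKLtoReal : (KL (pr.tilted h) pr).toReal = ∫ t, h t ∂(pr.tilted h) - Real.log Z := by
    rw [hKLs, ENNReal.toReal_ofReal hInn, hI]
  have hgibbs : ∫ t, h t ∂(pr.tilted h) - (KL (pr.tilted h) pr).toReal = Real.log Z := by
    rw [hKLtoReal]; ring
  -- upper bound for all ρ
  have hbound : ∀ x ∈ {x : ℝ | ∃ ρ : Measure T, IsProbabilityMeasure ρ ∧ KL ρ pr < ⊤ ∧
      x = ∫ t, h t ∂ρ - (KL ρ pr).toReal}, x ≤ Real.log Z := by
    rintro x ⟨ρ, hρ, hKL, rfl⟩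
    haveI := hρ
    have hcond : ρ ≪ pr ∧ Integrable (fun t => Real.log (ρ.rnDeriv pr t).toReal) ρ := by
      by_contra hc
      rw [KL, if_neg hc] at hKL
      exact absurd hKL (lt_irrefl _)
    obtain ⟨hac, hint⟩ := hcond
    have hnn := log_rnDeriv_integral_nonneg pr ρ hac hint
    have hKLval : (KL ρ pr).toReal = ∫ t, Real.log (ρ.rnDeriv pr t).toReal ∂ρ := by
      rw [KL, if_pos ⟨hac, hint⟩, ENNReal.toReal_ofReal hnn]
    rw [hKLval]
    exact gibbs_key pr h hmeas C hC ρ hac hint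
  have hmem : Real.log Z ∈ {x : ℝ | ∃ ρ : Measure T, IsProbabilityMeasure ρ ∧ KL ρ pr < ⊤ ∧
      x = ∫ t, h t ∂ρ - (KL ρ pr).toReal} :=
    ⟨pr.tilted h, hprob, hKLlt, hgibbs.symm⟩
  constructor
  · exact le_antisymm (le_csSup ⟨Real.log Z, hbound⟩ hmem) (csSup_le ⟨_, hmem⟩ hbound)
  · rw [hts]; exact hgibbs
end
end

section
/- Let Z be a standard Gaussian vector in ℝⁿ, D a diagonal matrix with nonnegative entries d₁,…,dₙ all at most V, and a ∈ ℝⁿ. Then for any β > 4σ²V, E[exp((2σ²/β)(ZᵀDZ + (2/√β) Zᵀ√D a))] ≤ exp((2σ²/β)(tr(D) + (2σ²/(β(β−4σ²V)))(β tr(D²) + 2 ‖√D a‖₂²))). -/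
open MeasureTheory ProbabilityTheory BigOperators

noncomputable section

open Real
open scoped ENNReal NNReal

private lemma log_ineq_aux {x : ℝ} (hx0 : 0 ≤ x) (hx1 : x < 1) :
    -Real.log (1 - x) ≤ x + x^2 / (2*(1-x)) := by
  have h1x : 0 < 1 - x := by linarith
  have habs : |x| < 1 := by rwa [abs_of_nonneg hx0]
  have hlog := Real.hasSum_pow_div_log_of_abs_lt_one habs
  have hgeo : HasSum (fun n : ℕ => x/2 * x^n) (x/2 * (1-x)⁻¹) :=
    (hasSum_geometric_of_lt_one hx0 hx1).mul_left _
  have hcor : HasSum (fun n : ℕ => if n = 0 then x/2 else 0) (x/2) := hasSum_ite_eq 0 (x/2)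
  have hg : HasSum (fun n : ℕ => x/2 * x^n + if n = 0 then x/2 else 0)
      (x/2 * (1-x)⁻¹ + x/2) := hgeo.add hcor
  have hle : -Real.log (1 - x) ≤ x/2 * (1-x)⁻¹ + x/2 := by
    refine hasSum_le (fun n => ?_) hlog hg
    cases n with
    | zero => norm_num
    | succ m =>
      simp only [Nat.succ_ne_zero, if_false, add_zero]
      have h2 : x/2 * x^(m+1) = x^(m+1+1)/2 := by ring
      rw [h2]
      gcongr
      push_cast
      linarith
  have heq : x/2 * (1-x)⁻¹ + x/2 = x + x^2/(2*(1-x)) := by field_simp; ring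
  linarith [heq ▸ hle]

private lemma integral_exp_quad_aux {b : ℝ} (hb : b < 0) (c : ℝ) :
    ∫ x : ℝ, Real.exp (b*x^2 + c*x) = Real.sqrt (π / (-b)) * Real.exp (-c^2/(4*b)) := by
  have hb' : 0 < -b := by linarith
  have hbne : b ≠ 0 := ne_of_lt hb
  have key : ∀ x : ℝ, Real.exp (b*x^2 + c*x)
      = Real.exp (b*(x + c/(2*b))^2) * Real.exp (-c^2/(4*b)) := by
    intro x; rw [← Real.exp_add]; congr 1; field_simp; ring
  simp_rw [key]
  rw [integral_mul_const]
  congr 1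
  have ht := MeasureTheory.integral_add_right_eq_self (μ := volume)
    (fun x : ℝ => Real.exp (b*x^2)) (c/(2*b))
  calc ∫ x : ℝ, Real.exp (b*(x + c/(2*b))^2)
      = ∫ x : ℝ, Real.exp (b*x^2) := ht
    _ = ∫ x : ℝ, Real.exp (-(-b)*x^2) := by simp_rw [neg_neg]
    _ = Real.sqrt (π / -b) := integral_gaussian (-b)

private lemma gauss_mgf_aux {t : ℝ} (ht : t < 1/2) (s : ℝ) :
    ∫ x : ℝ, Real.exp (t*x^2 + s*x) ∂(gaussianReal 0 1)
      = (Real.sqrt (1 - 2*t))⁻¹ * Real.exp (s^2 / (2*(1 - 2*t))) := by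
  have h12 : 0 < 1 - 2*t := by linarith
  rw [gaussianReal_of_var_ne_zero 0 one_ne_zero]
  have hmeas : Measurable fun x : ℝ => (gaussianPDFReal 0 1 x).toNNReal :=
    (measurable_gaussianPDFReal 0 1).real_toNNReal
  have hpdf : gaussianPDF 0 1 = fun x => ((fun x => (gaussianPDFReal 0 1 x).toNNReal) x : ℝ≥0∞) := by
    funext x; rw [gaussianPDF_def]; rfl
  rw [hpdf, integral_withDensity_eq_integral_smul hmeas]
  have hpdfval : ∀ x : ℝ, ((gaussianPDFReal 0 1 x).toNNReal : ℝ)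
      = (Real.sqrt (2*π))⁻¹ * Real.exp (-x^2/2) := by
    intro x
    rw [Real.coe_toNNReal _ (gaussianPDFReal_nonneg 0 1 x)]
    rw [gaussianPDFReal_def]
    norm_num
  have hint : ∀ x : ℝ, (((gaussianPDFReal 0 1 x).toNNReal : ℝ≥0)) • Real.exp (t*x^2 + s*x)
      = (Real.sqrt (2*π))⁻¹ * Real.exp ((t - 1/2)*x^2 + s*x) := by
    intro x
    rw [NNReal.smul_def, smul_eq_mul, hpdfval, mul_assoc, ← Real.exp_add]
    congr 2; ring
  simp_rw [hint]
  rw [integral_const_mul, integral_exp_quad_aux (by linarith : t - 1/2 < 0) s]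
  have hne : (1:ℝ) - 2*t ≠ 0 := ne_of_gt h12
  have h2 : Real.sqrt (π / -(t - 1/2)) = Real.sqrt (2*π) / Real.sqrt (1 - 2*t) := by
    rw [show -(t - 1/2) = (1-2*t)/2 by ring, div_div_eq_mul_div, mul_comm π 2,
      Real.sqrt_div (by positivity)]
  rw [h2]
  have hs2 : (0:ℝ) < Real.sqrt (2*π) := Real.sqrt_pos.mpr (by positivity)
  have hs1 : (0:ℝ) < Real.sqrt (1 - 2*t) := Real.sqrt_pos.mpr h12
  rw [show (4:ℝ)*(t-1/2) = -(2*(1-2*t)) by ring, div_neg, neg_div, neg_neg]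
  field_simp

private lemma sqrt_exp_bound {x xV : ℝ} (hx0 : 0 ≤ x) (hxxV : x ≤ xV) (hxV1 : xV < 1) :
    (Real.sqrt (1-x))⁻¹ ≤ Real.exp (x/2 + x^2/(4*(1-xV))) := by
  have hx1 : x < 1 := lt_of_le_of_lt hxxV hxV1
  have h1x : (0:ℝ) < 1 - x := by linarith
  have h1xV : (0:ℝ) < 1 - xV := by linarith
  have hne : (1:ℝ) - xV ≠ 0 := ne_of_gt h1xV
  have hlog := log_ineq_aux hx0 hx1
  have hmono : x^2/(2*(1-x)) ≤ x^2/(2*(1-xV)) :=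
    div_le_div_of_nonneg_left (by positivity) (by linarith) (by linarith)
  have h2u : -Real.log (1-x) ≤ 2*(x/2 + x^2/(4*(1-xV))) := by
    have heq2 : 2*(x/2 + x^2/(4*(1-xV))) = x + x^2/(2*(1-xV)) := by field_simp; ring
    linarith
  have hexp : Real.exp (-(2*(x/2 + x^2/(4*(1-xV))))) ≤ 1 - x := by
    rw [← Real.exp_log h1x]
    exact Real.exp_le_exp.mpr (by linarith)
  have hsq : Real.exp (-(x/2 + x^2/(4*(1-xV)))) ≤ Real.sqrt (1-x) := by
    have heq : Real.exp (-(x/2 + x^2/(4*(1-xV))))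
        = Real.sqrt (Real.exp (-(2*(x/2 + x^2/(4*(1-xV)))))) := by
      rw [show -(2*(x/2 + x^2/(4*(1-xV))))
          = -(x/2 + x^2/(4*(1-xV))) + -(x/2 + x^2/(4*(1-xV))) by ring,
        Real.exp_add, Real.sqrt_mul_self (Real.exp_pos _).le]
    rw [heq]
    exact Real.sqrt_le_sqrt hexp
  have h1 : (Real.sqrt (1-x))⁻¹ ≤ (Real.exp (-(x/2 + x^2/(4*(1-xV)))))⁻¹ :=
    inv_anti₀ (Real.exp_pos _) hsq
  rwa [← Real.exp_neg, neg_neg] at h1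

private lemma factor_bound_aux (σ2 V β D A : ℝ) (hσ : 0 < σ2) (hV : 0 < V)
    (hβ : 4*σ2*V < β) (hD0 : 0 ≤ D) (hDV : D ≤ V) :
    (Real.sqrt (1 - 2*(2*σ2/β*D)))⁻¹
      * Real.exp ((2*σ2/β*(2/Real.sqrt β)*(Real.sqrt D*A))^2 / (2*(1 - 2*(2*σ2/β*D))))
    ≤ Real.exp (2*σ2/β*D + 2*σ2/β*(2*σ2/(β*(β-4*σ2*V)))*(β*D^2 + 2*(D*A^2))) := by
  have hβ0 : (0:ℝ) < β := lt_trans (by positivity) hβ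
  have hβne : β ≠ 0 := ne_of_gt hβ0
  have hx0 : (0:ℝ) ≤ 4*σ2*D/β := by positivity
  have hxxV : 4*σ2*D/β ≤ 4*σ2*V/β := by gcongr
  have hxV1 : 4*σ2*V/β < 1 := by rw [div_lt_one hβ0]; linarith
  have hx1 : 4*σ2*D/β < 1 := lt_of_le_of_lt hxxV hxV1
  have h1x : (0:ℝ) < 1 - 4*σ2*D/β := by linarith
  have h1xV : (0:ℝ) < 1 - 4*σ2*V/β := by linarith
  have hxeq : 1 - 2*(2*σ2/β*D) = 1 - 4*σ2*D/β := by ring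
  rw [hxeq]
  have hA := sqrt_exp_bound hx0 hxxV hxV1
  have hB : (2*σ2/β*(2/Real.sqrt β)*(Real.sqrt D*A))^2 / (2*(1 - 4*σ2*D/β))
      ≤ (2*σ2/β*(2/Real.sqrt β)*(Real.sqrt D*A))^2 / (2*(1 - 4*σ2*V/β)) :=
    div_le_div_of_nonneg_left (by positivity) (by linarith) (by linarith)
  have hmain : (Real.sqrt (1 - 4*σ2*D/β))⁻¹
      * Real.exp ((2*σ2/β*(2/Real.sqrt β)*(Real.sqrt D*A))^2 / (2*(1 - 4*σ2*D/β)))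
      ≤ Real.exp ((4*σ2*D/β)/2 + (4*σ2*D/β)^2/(4*(1-4*σ2*V/β))
          + (2*σ2/β*(2/Real.sqrt β)*(Real.sqrt D*A))^2 / (2*(1 - 4*σ2*V/β))) := by
    rw [Real.exp_add]
    exact mul_le_mul hA (Real.exp_le_exp.mpr hB) (le_of_lt (Real.exp_pos _))
      (le_of_lt (Real.exp_pos _))
  refine hmain.trans (le_of_eq ?_)
  congr 1
  have hβs : Real.sqrt β^2 = β := Real.sq_sqrt hβ0.le
  have hDs : Real.sqrt D^2 = D := Real.sq_sqrt hD0
  have hs2 : (2*σ2/β*(2/Real.sqrt β)*(Real.sqrt D*A))^2 = (2*σ2/β)^2 * (4/β) * (D*A^2) := by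
    have h1 : (2*σ2/β*(2/Real.sqrt β)*(Real.sqrt D*A))^2
        = (2*σ2/β)^2 * (4/(Real.sqrt β^2)) * ((Real.sqrt D^2)*A^2) := by ring
    rw [h1, hβs, hDs]
  rw [hs2]
  have hd1 : β - 4*σ2*V ≠ 0 := by intro h; linarith
  field_simp
  ring

theorem gaussian_vector_quadratic_mgf {n : ℕ} (σ2 V β : ℝ)
    (hσ : 0 < σ2) (hV : 0 < V) (hβ : 4 * σ2 * V < β)
    (d a : Fin n → ℝ) (hd0 : ∀ i, 0 ≤ d i) (hdV : ∀ i, d i ≤ V) :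
    ∫ z : Fin n → ℝ,
        Real.exp ((2 * σ2 / β) * ((∑ i, d i * z i ^ 2)
          + (2 / Real.sqrt β) * ∑ i, Real.sqrt (d i) * a i * z i))
      ∂(Measure.pi fun _ => gaussianReal 0 1)
    ≤ Real.exp ((2 * σ2 / β) * ((∑ i, d i)
        + (2 * σ2 / (β * (β - 4 * σ2 * V)))
          * (β * ∑ i, (d i) ^ 2 + 2 * ∑ i, d i * (a i) ^ 2))) := by
  have hβ0 : (0:ℝ) < β := lt_trans (by positivity) hβ
  set t : Fin n → ℝ := fun i => 2*σ2/β * d i with htdef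
  set s : Fin n → ℝ := fun i => 2*σ2/β*(2/Real.sqrt β)*(Real.sqrt (d i)*a i) with hsdef
  have ht2 : ∀ i, t i < 1/2 := by
    intro i
    have h1 : t i = 2*σ2*(d i)/β := by simp only [htdef]; ring
    rw [h1, div_lt_iff₀ hβ0]
    nlinarith [hd0 i, hdV i]
  -- rewrite integrand as a product
  have hint : ∀ z : Fin n → ℝ,
      Real.exp ((2 * σ2 / β) * ((∑ i, d i * z i ^ 2)
          + (2 / Real.sqrt β) * ∑ i, Real.sqrt (d i) * a i * z i))
      = ∏ i, Real.exp (t i * z i ^ 2 + s i * z i) := by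
    intro z
    rw [← Real.exp_sum]
    congr 1
    simp only [htdef, hsdef, mul_add, Finset.mul_sum, ← Finset.sum_add_distrib]
    exact Finset.sum_congr rfl fun i _ => by ring
  simp_rw [hint]
  -- Fubini
  have hfub : ∫ z : Fin n → ℝ, ∏ i, Real.exp (t i * z i ^ 2 + s i * z i)
      ∂(Measure.pi fun _ => gaussianReal 0 1)
      = ∏ i, ∫ x : ℝ, Real.exp (t i * x ^ 2 + s i * x) ∂(gaussianReal 0 1) := by
    letI : MeasureSpace ℝ := ⟨gaussianReal 0 1⟩
    haveI : SigmaFinite (volume : Measure ℝ) :=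
      inferInstanceAs (SigmaFinite (gaussianReal 0 1))
    exact MeasureTheory.integral_fintype_prod_eq_prod
      (fun i x => Real.exp (t i * x ^ 2 + s i * x)) (μ := fun _ => gaussianReal 0 1)
  rw [hfub]
  -- evaluate each factor and bound
  have heval : ∀ i, ∫ x : ℝ, Real.exp (t i * x ^ 2 + s i * x) ∂(gaussianReal 0 1)
      = (Real.sqrt (1 - 2*(t i)))⁻¹ * Real.exp ((s i)^2 / (2*(1 - 2*(t i)))) :=
    fun i => gauss_mgf_aux (ht2 i) (s i)
  simp_rw [heval]
  have hbound : ∀ i ∈ Finset.univ,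
      (Real.sqrt (1 - 2*(t i)))⁻¹ * Real.exp ((s i)^2 / (2*(1 - 2*(t i))))
      ≤ Real.exp (2*σ2/β*(d i) + 2*σ2/β*(2*σ2/(β*(β-4*σ2*V)))*(β*(d i)^2 + 2*((d i)*(a i)^2))) :=
    fun i _ => factor_bound_aux σ2 V β (d i) (a i) hσ hV hβ (hd0 i) (hdV i)
  have hpos : ∀ i ∈ Finset.univ,
      (0:ℝ) ≤ (Real.sqrt (1 - 2*(t i)))⁻¹ * Real.exp ((s i)^2 / (2*(1 - 2*(t i)))) :=
    fun i _ => by positivity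
  refine (Finset.prod_le_prod hpos hbound).trans (le_of_eq ?_)
  rw [← Real.exp_sum]
  congr 1
  simp only [mul_add, Finset.mul_sum, ← Finset.sum_add_distrib]
  exact Finset.sum_congr rfl fun i _ => by ring
end
end

section
/- With γ = (β − 4σ²V(1+2δ) − √(β − 4σ²V)·√(β − 4σ²V(1+4δ)))/(16σ²δV²) for δ ∈ (0,1], σ² > 0, V > 0: for any β ≥ 4σ²V(1+4δ) one has 0 < 2γV ≤ 1, with strict inequality 2γV < 1 whenever β > 4σ²V(1+4δ). -/
noncomputable section

theorem gamma_bounds (σ2 V δ β : ℝ)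
    (hσ : 0 < σ2) (hV : 0 < V) (hδ0 : 0 < δ) (hδ1 : δ ≤ 1)
    (hβ : 4 * σ2 * V * (1 + 4 * δ) ≤ β) :
    let γ := (β - 4 * σ2 * V * (1 + 2 * δ)
        - Real.sqrt (β - 4 * σ2 * V) * Real.sqrt (β - 4 * σ2 * V * (1 + 4 * δ)))
        / (16 * σ2 * δ * V ^ 2)
    0 < 2 * γ * V ∧ 2 * γ * V ≤ 1
      ∧ (4 * σ2 * V * (1 + 4 * δ) < β → 2 * γ * V < 1) := by
  intro γ
  have hB : (0:ℝ) ≤ β - 4 * σ2 * V * (1 + 4 * δ) := by linarith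
  have hAB : β - 4 * σ2 * V * (1 + 4 * δ) < β - 4 * σ2 * V := by nlinarith [mul_pos (mul_pos hσ hV) hδ0]
  have hA : (0:ℝ) ≤ β - 4 * σ2 * V := by linarith
  set sa := Real.sqrt (β - 4 * σ2 * V) with hsa
  set sb := Real.sqrt (β - 4 * σ2 * V * (1 + 4 * δ)) with hsb
  have hsa2 : sa ^ 2 = β - 4 * σ2 * V := Real.sq_sqrt hA
  have hsb2 : sb ^ 2 = β - 4 * σ2 * V * (1 + 4 * δ) := Real.sq_sqrt hB
  have hsb0 : 0 ≤ sb := Real.sqrt_nonneg _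
  have hslt : sb < sa := Real.sqrt_lt_sqrt hB hAB
  have hden : (0:ℝ) < 16 * σ2 * δ * V ^ 2 := by positivity
  have hnum : β - 4 * σ2 * V * (1 + 2 * δ) - sa * sb = (sa - sb) ^ 2 / 2 := by
    nlinarith [hsa2, hsb2]
  have hkey : (sa - sb) * (sa + sb) = 16 * σ2 * δ * V := by nlinarith [hsa2, hsb2]
  have hγ : 2 * γ * V = (sa - sb) ^ 2 / (16 * σ2 * δ * V) := by
    show 2 * ((β - 4 * σ2 * V * (1 + 2 * δ) - sa * sb) / (16 * σ2 * δ * V ^ 2)) * V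
        = (sa - sb) ^ 2 / (16 * σ2 * δ * V)
    rw [hnum]
    field_simp
  have hd2 : (0:ℝ) < 16 * σ2 * δ * V := by positivity
  have hpos : 0 < 2 * γ * V := by
    rw [hγ]
    exact div_pos (pow_pos (sub_pos.mpr hslt) 2) hd2
  refine ⟨hpos, ?_, ?_⟩
  · rw [hγ, div_le_one hd2]
    nlinarith [hkey, hsb0, hslt]
  · intro hlt
    have hsb0' : 0 < sb := Real.sqrt_pos.mpr (by linarith)
    rw [hγ, div_lt_one hd2]
    nlinarith [hkey, hsb0', hslt]
end
end

section
/- Let δ > 0 and 0 < V ≤ 1/2, and let γ be the smallest nonnegative root of 2σ²δ(1+2γV)² = γ(β−4σ²V). Then the set N = {ν > 0 : (1+ν)γ < 1} is nonempty if and only if β > 4σ²V + 2σ²δ(1+2V)². -/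
noncomputable section

set_option maxHeartbeats 1000000 in
private lemma key_iff (b c e V : ℝ) (hb0 : 0 ≤ b) (hc0 : 0 ≤ c) (he0 : 0 < e)
    (hV0 : 0 < V) (hV1 : V ≤ 1 / 2)
    (hdS : (b - c) * (b + c) = 8 * e ^ 2 * V) :
    (b - c) ^ 2 < 16 * e ^ 2 * V ^ 2 ↔ e ^ 2 * (1 + 2 * V) ^ 2 < b ^ 2 := by
  have hprod : 0 < 8 * e ^ 2 * V := by positivity
  have heV : (0:ℝ) < 4 * e * V := by positivity
  have hS0 : 0 < b + c := by
    rcases lt_or_eq_of_le (by linarith : (0:ℝ) ≤ b + c) with h | h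
    · exact h
    · exfalso; nlinarith
  have hd0 : 0 < b - c := by
    by_contra hcon
    push_neg at hcon
    nlinarith [mul_nonpos_of_nonpos_of_nonneg hcon hS0.le]
  constructor
  · intro h
    have hd4 : b - c < 4 * e * V := by
      have h2 : (b - c) ^ 2 < (4 * e * V) ^ 2 := by nlinarith
      exact lt_of_pow_lt_pow_left₀ 2 heV.le h2
    have hS2 : 2 * e < b + c := by
      have key : 8 * e ^ 2 * V < 4 * e * V * (b + c) := by
        calc 8 * e ^ 2 * V = (b - c) * (b + c) := hdS.symm
          _ < 4 * e * V * (b + c) := by exact mul_lt_mul_of_pos_right hd4 hS0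
      nlinarith [key, heV, he0]
    have hp1 : 0 < (b + c) ^ 2 - 4 * e ^ 2 := by nlinarith
    have hp2 : 0 < (b + c) ^ 2 - 16 * e ^ 2 * V ^ 2 := by nlinarith
    have hd2S2 : (b - c) ^ 2 * (b + c) ^ 2 = 64 * e ^ 4 * V ^ 2 := by
      rw [show (b - c) ^ 2 * (b + c) ^ 2 = ((b - c) * (b + c)) ^ 2 by ring, hdS]; ring
    have key : 0 < (b + c) ^ 2 * ((b + c) ^ 2 + (b - c) ^ 2 - 4 * e ^ 2 - 16 * e ^ 2 * V ^ 2) := by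
      nlinarith [mul_pos hp1 hp2]
    have hS2pos : 0 < (b + c) ^ 2 := by positivity
    have key2 : 0 < (b + c) ^ 2 + (b - c) ^ 2 - 4 * e ^ 2 - 16 * e ^ 2 * V ^ 2 := by
      nlinarith [key, hS2pos]
    nlinarith [key2, hdS]
  · intro h
    have hbB : (e * (1 + 2 * V)) ^ 2 < b ^ 2 := by nlinarith
    have hbgt : e * (1 + 2 * V) < b := lt_of_pow_lt_pow_left₀ 2 hb0 hbB
    have hcB : (e * (1 - 2 * V)) ^ 2 < c ^ 2 := by nlinarith [hdS]
    have hcgt : e * (1 - 2 * V) < c := lt_of_pow_lt_pow_left₀ 2 hc0 hcB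
    have hS2 : 2 * e < b + c := by nlinarith
    have key : (b - c) * (2 * e) < 8 * e ^ 2 * V := by
      calc (b - c) * (2 * e) < (b - c) * (b + c) := by
            exact mul_lt_mul_of_pos_left hS2 hd0
        _ = 8 * e ^ 2 * V := hdS
    have hd4 : b - c < 4 * e * V := by nlinarith [key, he0, hd0]
    nlinarith [hd4, hd0, mul_pos he0 hV0]

set_option maxHeartbeats 1000000 in
theorem N_nonempty_iff (σ2 V δ β : ℝ)
    (hσ : 0 < σ2) (hV0 : 0 < V) (hV1 : V ≤ 1 / 2) (hδ : 0 < δ)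
    (hβ : 4 * σ2 * V * (1 + 4 * δ) ≤ β) :
    let γ := (β - 4 * σ2 * V * (1 + 2 * δ)
        - Real.sqrt (β - 4 * σ2 * V) * Real.sqrt (β - 4 * σ2 * V * (1 + 4 * δ)))
        / (16 * σ2 * δ * V ^ 2)
    ({ν : ℝ | 0 < ν ∧ (1 + ν) * γ < 1}).Nonempty
      ↔ 4 * σ2 * V + 2 * σ2 * δ * (1 + 2 * V) ^ 2 < β := by
  intro γ
  have hred : ({ν : ℝ | 0 < ν ∧ (1 + ν) * γ < 1}).Nonempty ↔ γ < 1 := by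
    constructor
    · rintro ⟨ν, hν, h⟩
      by_contra hc
      push_neg at hc
      nlinarith
    · intro h
      rcases le_or_gt γ 0 with h0 | h0
      · exact ⟨1, one_pos, by nlinarith⟩
      · refine ⟨(1 - γ) / (2 * γ), div_pos (by linarith) (by linarith), ?_⟩
        have heq : (1 + (1 - γ) / (2 * γ)) * γ = (1 + γ) / 2 := by
          field_simp; ring
        rw [heq]; linarith
  rw [hred]
  have hC0 : (0:ℝ) ≤ β - 4 * σ2 * V * (1 + 4 * δ) := by linarith
  have hB0 : (0:ℝ) < β - 4 * σ2 * V := by nlinarith [mul_pos (mul_pos hσ hδ) hV0]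
  set b := Real.sqrt (β - 4 * σ2 * V) with hbdef
  set c := Real.sqrt (β - 4 * σ2 * V * (1 + 4 * δ)) with hcdef
  have hb2 : b ^ 2 = β - 4 * σ2 * V := Real.sq_sqrt hB0.le
  have hc2 : c ^ 2 = β - 4 * σ2 * V * (1 + 4 * δ) := Real.sq_sqrt hC0
  have hb0 : 0 ≤ b := Real.sqrt_nonneg _
  have hc0 : 0 ≤ c := Real.sqrt_nonneg _
  have hE : (0:ℝ) < 2 * σ2 * δ := by positivity
  set e := Real.sqrt (2 * σ2 * δ) with hedef
  have he2 : e ^ 2 = 2 * σ2 * δ := Real.sq_sqrt hE.le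
  have he0 : 0 < e := Real.sqrt_pos.mpr hE
  have hγeq : γ = (b - c) ^ 2 / (2 * (16 * σ2 * δ * V ^ 2)) := by
    rw [show γ = (β - 4 * σ2 * V * (1 + 2 * δ) - b * c) / (16 * σ2 * δ * V ^ 2) from rfl]
    rw [show β - 4 * σ2 * V * (1 + 2 * δ) - b * c = (b - c) ^ 2 / 2 by
      rw [show (b - c) ^ 2 = b ^ 2 + c ^ 2 - 2 * (b * c) by ring, hb2, hc2]; ring]
    field_simp
  have hγ1 : γ < 1 ↔ (b - c) ^ 2 < 16 * e ^ 2 * V ^ 2 := by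
    rw [hγeq, div_lt_one (by positivity), he2]
    constructor <;> intro h <;> linarith
  rw [hγ1]
  have hdS : (b - c) * (b + c) = 8 * e ^ 2 * V := by
    rw [show (b - c) * (b + c) = b ^ 2 - c ^ 2 by ring, hb2, hc2, he2]; ring
  rw [key_iff b c e V hb0 hc0 he0 hV0 hV1 hdS]
  constructor <;> intro h <;> nlinarith [hb2, he2]
end
end
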